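/- Under the two-solution setup, the real number (2·L_{m₁})^{k₂}·(2·L_{m₂})^{−k₁}·α^{−(k₂·n₁ − k₁·n₂)} is different from 1; equivalently, (2·L_{m₁})^{k₂} ≠ (2·L_{m₂})^{k₁}·α^{k₂·n₁ − k₁·n₂}, where the exponent k₂·n₁ − k₁·n₂ is an integer. -/

import Mathlib

/-- The Lucas numbers: L₀ = 2, L₁ = 1, L_{n+2} = L_{n+1} + L_n. -/
def lucas : ℕ → ℕ
  | 0 => 2
  | 1 => 1
  | n + 2 => lucas (n + 1) + lucas n

/-- The golden ratio α = (1 + √5)/2. -/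
noncomputable def alpha : ℝ := (1 + Real.sqrt 5) / 2

noncomputable def beta : ℝ := (1 - Real.sqrt 5) / 2

lemma sqrt5_sq : Real.sqrt 5 ^ 2 = 5 := Real.sq_sqrt (by norm_num)

lemma alpha_beta : alpha * beta = -1 := by
  unfold alpha beta; linear_combination (-(1:ℝ)/4) * sqrt5_sq

lemma alpha_add_beta : alpha + beta = 1 := by unfold alpha beta; ring

lemma alpha_sq : alpha ^ 2 = alpha + 1 := by
  unfold alpha; linear_combination (1/4 : ℝ) * sqrt5_sq

lemma beta_sq : beta ^ 2 = beta + 1 := by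
  unfold beta; linear_combination (1/4 : ℝ) * sqrt5_sq

lemma alpha_pos : 0 < alpha := by
  unfold alpha
  have := Real.sqrt_nonneg 5
  linarith

lemma lucas_pos : ∀ n, 0 < lucas n
  | 0 => by decide
  | 1 => by decide
  | (n+2) => by
      rw [lucas]
      exact Nat.add_pos_left (lucas_pos (n+1)) _

lemma lucas_binet : ∀ n : ℕ, (lucas n : ℝ) = alpha ^ n + beta ^ n
  | 0 => by norm_num [lucas]
  | 1 => by
      rw [show lucas 1 = 1 from rfl]
      rw [pow_one, pow_one, alpha_add_beta, Nat.cast_one]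
  | (n+2) => by
      have e1 := lucas_binet (n+1)
      have e2 := lucas_binet n
      rw [show lucas (n+2) = lucas (n+1) + lucas n from rfl, Nat.cast_add, e1, e2]
      linear_combination (-(alpha^n)) * alpha_sq - beta^n * beta_sq

def S8 (x y : ℕ) : Prop :=
  (x=2∧y=1)∨(x=1∧y=3)∨(x=3∧y=4)∨(x=4∧y=7)∨(x=7∧y=3)∨(x=3∧y=2)∨
  (x=2∧y=5)∨(x=5∧y=7)∨(x=7∧y=4)∨(x=4∧y=3)∨(x=3∧y=7)∨(x=7∧y=2)

lemma lucas_mod8_mem : ∀ n : ℕ, S8 (lucas n % 8) (lucas (n+1) % 8) := by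
  intro n
  induction n with
  | zero =>
    have h0 : lucas 0 = 2 := rfl
    have h1 : lucas 1 = 1 := rfl
    unfold S8
    rw [h0, h1]
    norm_num
  | succ n ih =>
    have h2' : lucas (n+1+1) % 8 = (lucas (n+1) % 8 + lucas n % 8) % 8 := by
      have : lucas (n+1+1) = lucas (n+1) + lucas n := rfl
      rw [this, Nat.add_mod]
    unfold S8 at ih ⊢
    rcases ih with ⟨e1,e2⟩|⟨e1,e2⟩|⟨e1,e2⟩|⟨e1,e2⟩|⟨e1,e2⟩|⟨e1,e2⟩|⟨e1,e2⟩|⟨e1,e2⟩|⟨e1,e2⟩|⟨e1,e2⟩|⟨e1,e2⟩|⟨e1,e2⟩ <;>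
      rw [h2', e1, e2] <;> norm_num

lemma lucas_mod8_ne (n : ℕ) : lucas n % 8 ≠ 0 := by
  have := lucas_mod8_mem n
  unfold S8 at this
  omega

lemma alpha_irrational : Irrational alpha := by
  have h5 : Irrational (Real.sqrt 5) := by
    have := (by norm_num : Nat.Prime 5).irrational_sqrt
    simpa using this
  have h : Irrational ((1/2 : ℚ) * Real.sqrt 5) := h5.ratCast_mul (by norm_num)
  have h2 : Irrational (((1/2 : ℚ) : ℝ) + (1/2 : ℚ) * Real.sqrt 5) := h.ratCast_add (1/2 : ℚ)
  have : alpha = ((1/2 : ℚ) : ℝ) + (1/2 : ℚ) * Real.sqrt 5 := by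
    unfold alpha; push_cast; ring
  rwa [← this] at h2

lemma alpha_pow_fib : ∀ n : ℕ, alpha ^ (n+1) = (Nat.fib (n+1) : ℝ) * alpha + Nat.fib n
  | 0 => by simp
  | (n+1) => by
      have ih := alpha_pow_fib n
      have h : alpha ^ (n+2) = alpha ^ (n+1) * alpha := by ring
      rw [h, ih, Nat.fib_add_two]
      push_cast
      linear_combination (Nat.fib (n+1) : ℝ) * alpha_sq

lemma alpha_pow_irrational (n : ℕ) : Irrational (alpha ^ (n+1)) := by
  rw [alpha_pow_fib n]
  have h1 : Irrational ((Nat.fib (n+1) : ℝ) * alpha) :=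
    alpha_irrational.natCast_mul (Nat.fib_pos.mpr n.succ_pos).ne'
  exact h1.add_natCast (Nat.fib n)

lemma alpha_zpow_rat : ∀ (e : ℤ) (q : ℚ), alpha ^ e = (q : ℝ) → e = 0 := by
  have hpos : ∀ e : ℤ, 0 < e → ∀ q : ℚ, alpha ^ e ≠ (q : ℝ) := by
    intro e he q h
    obtain ⟨n, hn⟩ : ∃ n : ℕ, e = ((n : ℤ) + 1) := ⟨(e - 1).toNat, by omega⟩
    have : alpha ^ (n+1) = (q : ℝ) := by
      rw [← h, hn]
      rw [← zpow_natCast alpha (n+1)]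
      norm_num
    exact (alpha_pow_irrational n) ⟨q, this.symm⟩
  intro e q h
  rcases lt_trichotomy e 0 with he | he | he
  · exfalso
    have hq0 : (0:ℝ) < (q:ℝ) := h ▸ zpow_pos alpha_pos e
    have h' : alpha ^ (-e) = ((q⁻¹ : ℚ) : ℝ) := by
      rw [zpow_neg, h, Rat.cast_inv]
    exact hpos (-e) (by omega) q⁻¹ h'
  · exact he
  · exact absurd h (hpos e he q)

set_option maxHeartbeats 2000000 in
theorem stmt_13
    (d x1 y1 : ℕ) (ε : ℤ) (δ η : ℝ) (X : ℕ → ℝ)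
    (hd : 2 ≤ d) (hdsf : Squarefree d)
    (hx1 : 1 ≤ x1) (hy1 : 1 ≤ y1)
    (hε : (x1 : ℤ) ^ 2 - (d : ℤ) * (y1 : ℤ) ^ 2 = ε)
    (hεpm : ε = 1 ∨ ε = -1)
    (hmin : ∀ x y : ℕ, 1 ≤ x → 1 ≤ y →
      ((x : ℤ) ^ 2 - (d : ℤ) * (y : ℤ) ^ 2 = 1 ∨
        (x : ℤ) ^ 2 - (d : ℤ) * (y : ℤ) ^ 2 = -1) → x1 ≤ x)
    (hδ : δ = (x1 : ℝ) + (y1 : ℝ) * Real.sqrt d)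
    (hη : η = (x1 : ℝ) - (y1 : ℝ) * Real.sqrt d)
    (hX : ∀ k : ℕ, X k = (δ ^ k + η ^ k) / 2)
    (k1 n1 m1 k2 n2 m2 : ℕ)
    (hk1 : 1 ≤ k1) (hk2 : 1 ≤ k2) (hk12 : k1 < k2)
    (hnm1 : m1 ≤ n1) (hnm2 : m2 ≤ n2)
    (hsol1 : X k1 = ((lucas n1 * lucas m1 : ℕ) : ℝ))
    (hsol2 : X k2 = ((lucas n2 * lucas m2 : ℕ) : ℝ)) :
    ((2 * lucas m1 : ℕ) : ℝ) ^ k2 ≠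
      ((2 * lucas m2 : ℕ) : ℝ) ^ k1 * alpha ^ ((k2 : ℤ) * (n1 : ℤ) - (k1 : ℤ) * (n2 : ℤ)) := by
  intro h
  have hl1 : 0 < lucas m1 := lucas_pos m1
  have hl2 : 0 < lucas m2 := lucas_pos m2
  have ha2 : 2 ≤ 2 * lucas m1 := by omega
  have hb2 : 2 ≤ 2 * lucas m2 := by omega
  have hbRpos : (0:ℝ) < ((2 * lucas m2 : ℕ) : ℝ) := by exact_mod_cast (by omega : 0 < 2 * lucas m2)
  have hbpow : ((2 * lucas m2 : ℕ) : ℝ) ^ k1 ≠ 0 := ne_of_gt (pow_pos hbRpos k1)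
  -- Step A : the exponent is zero
  have hq : alpha ^ ((k2 : ℤ) * (n1 : ℤ) - (k1 : ℤ) * (n2 : ℤ)) =
      ((((2 * lucas m1 : ℕ) : ℚ) ^ k2 / ((2 * lucas m2 : ℕ) : ℚ) ^ k1 : ℚ) : ℝ) := by
    rw [Rat.cast_div, Rat.cast_pow, Rat.cast_pow, Rat.cast_natCast, Rat.cast_natCast,
      eq_div_iff hbpow, mul_comm]
    exact h.symm
  have he0 := alpha_zpow_rat _ _ hq
  have hnn : k2 * n1 = k1 * n2 := by
    have h' : (k2 : ℤ) * n1 = (k1 : ℤ) * n2 := by linarith [he0]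
    exact_mod_cast h'
  rw [he0, zpow_zero, mul_one] at h
  have hnat : (2 * lucas m1) ^ k2 = (2 * lucas m2) ^ k1 := by exact_mod_cast h
  -- common real facts
  have hδη : δ * η = ((ε : ℤ) : ℝ) := by
    have hsq : Real.sqrt d ^ 2 = (d : ℝ) := Real.sq_sqrt (Nat.cast_nonneg d)
    have hcast : ((x1 : ℝ)) ^ 2 - (d : ℝ) * (y1 : ℝ) ^ 2 = ((ε : ℤ) : ℝ) := by exact_mod_cast hε
    rw [hδ, hη]
    linear_combination hcast - (y1 : ℝ) ^ 2 * hsq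
  have hεR2 : ((ε : ℤ) : ℝ) ^ 2 = 1 := by rcases hεpm with h0 | h0 <;> rw [h0] <;> norm_num
  have S1 : δ ^ k1 + η ^ k1 = 2 * (lucas n1 : ℝ) * (lucas m1 : ℝ) := by
    rw [hX k1] at hsol1
    push_cast at hsol1
    linarith
  have S2 : δ ^ k2 + η ^ k2 = 2 * (lucas n2 : ℝ) * (lucas m2 : ℝ) := by
    rw [hX k2] at hsol2
    push_cast at hsol2
    linarith
  -- gcd setup
  set g := Nat.gcd k1 k2 with hg_def
  have hgpos : 0 < g := Nat.gcd_pos_of_pos_left k2 hk1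
  have hdl : g ∣ k1 := Nat.gcd_dvd_left k1 k2
  have hdr : g ∣ k2 := Nat.gcd_dvd_right k1 k2
  have hk1g : k1 = g * (k1 / g) := (Nat.mul_div_cancel' hdl).symm
  have hk2g : k2 = g * (k2 / g) := (Nat.mul_div_cancel' hdr).symm
  have huv : Nat.Coprime (k1 / g) (k2 / g) := Nat.coprime_div_gcd_div_gcd hgpos
  have hupos : 0 < k1 / g := Nat.div_pos (Nat.le_of_dvd (by omega) hdl) hgpos
  have hultv : k1 / g < k2 / g := by
    by_contra hle
    push_neg at hle
    have : k2 ≤ k1 := by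
      conv_lhs => rw [hk2g]
      conv_rhs => rw [hk1g]
      exact Nat.mul_le_mul_left g hle
    omega
  have habuv : (2 * lucas m1) ^ (k2 / g) = (2 * lucas m2) ^ (k1 / g) := by
    apply Nat.pow_left_injective hgpos.ne'
    show ((2 * lucas m1) ^ (k2 / g)) ^ g = ((2 * lucas m2) ^ (k1 / g)) ^ g
    rw [← pow_mul, ← pow_mul, mul_comm (k2 / g) g, mul_comm (k1 / g) g, ← hk2g, ← hk1g]
    exact hnat
  -- 2-adic valuation bounds
  have ha0 : (2 * lucas m1) ≠ 0 := by omega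
  have hb0 : (2 * lucas m2) ≠ 0 := by omega
  have hfact : (k2 / g) * ((2 * lucas m1).factorization 2) =
      (k1 / g) * ((2 * lucas m2).factorization 2) := by
    have h' := congrArg (fun n : ℕ => n.factorization 2) habuv
    simpa [Nat.factorization_pow, Finsupp.smul_apply] using h'
  have hfb3 : (2 * lucas m2).factorization 2 ≤ 3 := by
    by_contra hgt
    push_neg at hgt
    have h16 : (2 : ℕ) ^ 4 ∣ 2 * lucas m2 :=
      (Nat.Prime.pow_dvd_iff_le_factorization Nat.prime_two hb0).mpr hgt
    obtain ⟨t, ht⟩ := h16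
    have := lucas_mod8_ne m2
    omega
  have hfb1 : 1 ≤ (2 * lucas m2).factorization 2 := by
    have h21 : (2 : ℕ) ^ 1 ∣ 2 * lucas m2 := by
      rw [pow_one]; exact Dvd.intro (lucas m2) rfl
    exact (Nat.Prime.pow_dvd_iff_le_factorization Nat.prime_two hb0).mp h21
  have hvdvd : (k2 / g) ∣ (2 * lucas m2).factorization 2 := by
    refine (huv.symm).dvd_of_dvd_mul_left ⟨(2 * lucas m1).factorization 2, hfact.symm⟩
  have hv3 : k2 / g ≤ 3 := le_trans (Nat.le_of_dvd (by omega) hvdvd) hfb3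
  have hcase : (k1 / g = 1 ∧ k2 / g = 2) ∨ (k1 / g = 1 ∧ k2 / g = 3) ∨
      (k1 / g = 2 ∧ k2 / g = 3) := by omega
  -- squares of signs
  have hsgnR : ∀ k : ℕ, (((ε : ℤ) : ℝ) ^ k) ^ 2 = 1 := by
    intro k
    rw [← pow_mul, mul_comm k 2, pow_mul, hεR2, one_pow]
  have hngR : ∀ k : ℕ, ((-1 : ℝ) ^ k) ^ 2 = 1 := by
    intro k
    rw [← pow_mul, mul_comm k 2, pow_mul]
    norm_num
  have haR2 : (2 : ℝ) ≤ ((2 * lucas m1 : ℕ) : ℝ) := by exact_mod_cast ha2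
  rcases hcase with ⟨hu1, hv2⟩ | ⟨hu1, hv3'⟩ | ⟨hu2, hv3'⟩
  · -- case (u,v) = (1,2) : k2 = 2 k1
    rw [hu1, mul_one] at hk1g
    rw [hv2] at hk2g
    have hk2eq : k2 = 2 * k1 := by omega
    rw [hu1, hv2, pow_one] at habuv
    have hbeq : 2 * lucas m2 = (2 * lucas m1) ^ 2 := habuv.symm
    have hn2eq : n2 = 2 * n1 := by
      have h' : k1 * (2 * n1) = k1 * n2 := by
        calc k1 * (2 * n1) = (2 * k1) * n1 := by ring
        _ = k2 * n1 := by rw [hk2eq]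
        _ = k1 * n2 := hnn
      exact (Nat.eq_of_mul_eq_mul_left hk1 h').symm
    have hAB : δ ^ k1 * η ^ k1 = ((ε : ℤ) : ℝ) ^ k1 := by rw [← mul_pow, hδη]
    have hxy : alpha ^ n1 * beta ^ n1 = (-1 : ℝ) ^ n1 := by rw [← mul_pow, alpha_beta]
    have h1 : δ ^ k1 + η ^ k1 = ((2 * lucas m1 : ℕ) : ℝ) * (alpha ^ n1 + beta ^ n1) := by
      rw [S1, ← lucas_binet n1]
      push_cast
      ring
    have h2 : (δ ^ k1) ^ 2 + (η ^ k1) ^ 2 =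
        ((2 * lucas m1 : ℕ) : ℝ) ^ 2 * ((alpha ^ n1) ^ 2 + (beta ^ n1) ^ 2) := by
      have e1 : δ ^ k2 = (δ ^ k1) ^ 2 := by rw [hk2eq, mul_comm 2 k1, pow_mul]
      have e2 : η ^ k2 = (η ^ k1) ^ 2 := by rw [hk2eq, mul_comm 2 k1, pow_mul]
      have e3 : (lucas n2 : ℝ) = (alpha ^ n1) ^ 2 + (beta ^ n1) ^ 2 := by
        rw [hn2eq, lucas_binet, mul_comm 2 n1, pow_mul, pow_mul]
      have e4 : (2 : ℝ) * (lucas m2 : ℝ) = (2 * (lucas m1 : ℝ)) ^ 2 := by exact_mod_cast hbeq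
      rw [← e1, ← e2, S2, e3]
      push_cast
      linear_combination ((alpha ^ n1) ^ 2 + (beta ^ n1) ^ 2) * e4
    have hkey : ((ε : ℤ) : ℝ) ^ k1 = ((2 * lucas m1 : ℕ) : ℝ) ^ 2 * (-1 : ℝ) ^ n1 := by
      have hsq : (δ ^ k1 + η ^ k1) ^ 2 =
          ((2 * lucas m1 : ℕ) : ℝ) ^ 2 * (alpha ^ n1 + beta ^ n1) ^ 2 := by rw [h1]; ring
      linear_combination (1/2 : ℝ) * hsq - (1/2 : ℝ) * h2 - hAB +
        ((2 * lucas m1 : ℕ) : ℝ) ^ 2 * hxy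
    have hkey2 : (((ε : ℤ) : ℝ) ^ k1) ^ 2 =
        (((2 * lucas m1 : ℕ) : ℝ) ^ 2 * (-1 : ℝ) ^ n1) ^ 2 := by rw [hkey]
    have h14 : (1 : ℝ) = ((2 * lucas m1 : ℕ) : ℝ) ^ 4 := by
      linear_combination -hsgnR k1 + hkey2 + ((2 * lucas m1 : ℕ) : ℝ) ^ 4 * hngR n1
    have h16 : (16 : ℝ) ≤ ((2 * lucas m1 : ℕ) : ℝ) ^ 4 := by
      calc (16 : ℝ) = 2 ^ 4 := by norm_num
      _ ≤ ((2 * lucas m1 : ℕ) : ℝ) ^ 4 := pow_le_pow_left₀ (by norm_num) haR2 4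
    linarith [h14, h16]
  · -- case (u,v) = (1,3) : k2 = 3 k1
    rw [hu1, mul_one] at hk1g
    rw [hv3'] at hk2g
    have hk2eq : k2 = 3 * k1 := by omega
    rw [hu1, hv3', pow_one] at habuv
    have hbeq : 2 * lucas m2 = (2 * lucas m1) ^ 3 := habuv.symm
    have hn2eq : n2 = 3 * n1 := by
      have h' : k1 * (3 * n1) = k1 * n2 := by
        calc k1 * (3 * n1) = (3 * k1) * n1 := by ring
        _ = k2 * n1 := by rw [hk2eq]
        _ = k1 * n2 := hnn
      exact (Nat.eq_of_mul_eq_mul_left hk1 h').symm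
    have hAB : δ ^ k1 * η ^ k1 = ((ε : ℤ) : ℝ) ^ k1 := by rw [← mul_pow, hδη]
    have hxy : alpha ^ n1 * beta ^ n1 = (-1 : ℝ) ^ n1 := by rw [← mul_pow, alpha_beta]
    have h1 : δ ^ k1 + η ^ k1 = ((2 * lucas m1 : ℕ) : ℝ) * (alpha ^ n1 + beta ^ n1) := by
      rw [S1, ← lucas_binet n1]
      push_cast
      ring
    have h2 : (δ ^ k1) ^ 3 + (η ^ k1) ^ 3 =
        ((2 * lucas m1 : ℕ) : ℝ) ^ 3 * ((alpha ^ n1) ^ 3 + (beta ^ n1) ^ 3) := by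
      have e1 : δ ^ k2 = (δ ^ k1) ^ 3 := by rw [hk2eq, mul_comm 3 k1, pow_mul]
      have e2 : η ^ k2 = (η ^ k1) ^ 3 := by rw [hk2eq, mul_comm 3 k1, pow_mul]
      have e3 : (lucas n2 : ℝ) = (alpha ^ n1) ^ 3 + (beta ^ n1) ^ 3 := by
        rw [hn2eq, lucas_binet, mul_comm 3 n1, pow_mul, pow_mul]
      have e4 : (2 : ℝ) * (lucas m2 : ℝ) = (2 * (lucas m1 : ℝ)) ^ 3 := by exact_mod_cast hbeq
      rw [← e1, ← e2, S2, e3]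
      push_cast
      linear_combination ((alpha ^ n1) ^ 3 + (beta ^ n1) ^ 3) * e4
    have hcube : (δ ^ k1 + η ^ k1) ^ 3 =
        ((2 * lucas m1 : ℕ) : ℝ) ^ 3 * (alpha ^ n1 + beta ^ n1) ^ 3 := by rw [h1]; ring
    have hc : (3 * (((ε : ℤ) : ℝ) ^ k1)) * (((2 * lucas m1 : ℕ) : ℝ) * (alpha ^ n1 + beta ^ n1)) =
        (3 * (((2 * lucas m1 : ℕ) : ℝ) ^ 2 * (-1 : ℝ) ^ n1)) *
          (((2 * lucas m1 : ℕ) : ℝ) * (alpha ^ n1 + beta ^ n1)) := by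
      linear_combination hcube - h2 - 3 * (δ ^ k1 + η ^ k1) * hAB +
        3 * ((2 * lucas m1 : ℕ) : ℝ) ^ 3 * (alpha ^ n1 + beta ^ n1) * hxy -
        3 * ((ε : ℤ) : ℝ) ^ k1 * h1
    have hposf : (0 : ℝ) < ((2 * lucas m1 : ℕ) : ℝ) * (alpha ^ n1 + beta ^ n1) := by
      rw [← lucas_binet n1]
      have h1' : (0:ℝ) < (lucas n1 : ℝ) := by exact_mod_cast lucas_pos n1
      exact mul_pos (by linarith [haR2]) h1'
    have hkey : ((ε : ℤ) : ℝ) ^ k1 = ((2 * lucas m1 : ℕ) : ℝ) ^ 2 * (-1 : ℝ) ^ n1 := by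
      have := mul_right_cancel₀ (ne_of_gt hposf) hc
      linarith
    have hkey2 : (((ε : ℤ) : ℝ) ^ k1) ^ 2 =
        (((2 * lucas m1 : ℕ) : ℝ) ^ 2 * (-1 : ℝ) ^ n1) ^ 2 := by rw [hkey]
    have h14 : (1 : ℝ) = ((2 * lucas m1 : ℕ) : ℝ) ^ 4 := by
      linear_combination -hsgnR k1 + hkey2 + ((2 * lucas m1 : ℕ) : ℝ) ^ 4 * hngR n1
    have h16 : (16 : ℝ) ≤ ((2 * lucas m1 : ℕ) : ℝ) ^ 4 := by
      calc (16 : ℝ) = 2 ^ 4 := by norm_num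
      _ ≤ ((2 * lucas m1 : ℕ) : ℝ) ^ 4 := pow_le_pow_left₀ (by norm_num) haR2 4
    linarith [h14, h16]
  · -- case (u,v) = (2,3)
    rw [hu2] at hk1g
    rw [hv3'] at hk2g
    rw [hu2, hv3'] at habuv
    -- habuv : (2 L m1)^3 = (2 L m2)^2
    have hn32 : 3 * n1 = 2 * n2 := by
      have h' : g * (3 * n1) = g * (2 * n2) := by
        calc g * (3 * n1) = (g * 3) * n1 := by ring
        _ = k2 * n1 := by rw [← hk2g]
        _ = k1 * n2 := hnn
        _ = (g * 2) * n2 := by rw [hk1g]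
        _ = g * (2 * n2) := by ring
      exact Nat.eq_of_mul_eq_mul_left hgpos h'
    obtain ⟨w, hn1w, hn2w⟩ : ∃ w, n1 = 2 * w ∧ n2 = 3 * w := ⟨n2 - n1, by omega, by omega⟩
    -- extract c
    have hadvd : (2 * lucas m1) ∣ (2 * lucas m2) := by
      have hdd : (2 * lucas m1) ^ 2 ∣ (2 * lucas m2) ^ 2 :=
        ⟨2 * lucas m1, by rw [← habuv]; ring⟩
      exact (Nat.pow_dvd_pow_iff two_ne_zero).mp hdd
    obtain ⟨c, hc⟩ := hadvd
    have hca : 2 * lucas m1 = c ^ 2 := by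
      have h' : (2 * lucas m1) ^ 2 * (2 * lucas m1) = (2 * lucas m1) ^ 2 * c ^ 2 := by
        calc (2 * lucas m1) ^ 2 * (2 * lucas m1) = (2 * lucas m1) ^ 3 := by ring
        _ = (2 * lucas m2) ^ 2 := habuv
        _ = (2 * lucas m1) ^ 2 * c ^ 2 := by rw [hc]; ring
      exact Nat.eq_of_mul_eq_mul_left (pow_pos (by omega) 2) h'
    have hcb : 2 * lucas m2 = c ^ 3 := by rw [hc, hca]; ring
    have hc2 : 2 ≤ c := by
      by_contra hlt
      push_neg at hlt
      have hle : c ^ 2 ≤ 1 := by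
        have := Nat.pow_le_pow_left (show c ≤ 1 by omega) 2
        simpa using this
      omega
    -- real part
    have hABg : δ ^ g * η ^ g = ((ε : ℤ) : ℝ) ^ g := by rw [← mul_pow, hδη]
    have hxyw : alpha ^ w * beta ^ w = (-1 : ℝ) ^ w := by rw [← mul_pow, alpha_beta]
    have hA2 : δ ^ k1 = (δ ^ g) ^ 2 := by rw [hk1g, pow_mul]
    have hB2 : η ^ k1 = (η ^ g) ^ 2 := by rw [hk1g, pow_mul]
    have hA3 : δ ^ k2 = (δ ^ g) ^ 3 := by rw [hk2g, pow_mul]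
    have hB3 : η ^ k2 = (η ^ g) ^ 3 := by rw [hk2g, pow_mul]
    have hl2w : (lucas n1 : ℝ) = (alpha ^ w) ^ 2 + (beta ^ w) ^ 2 := by
      rw [hn1w, lucas_binet, mul_comm 2 w, pow_mul, pow_mul]
    have hl3w : (lucas n2 : ℝ) = (alpha ^ w) ^ 3 + (beta ^ w) ^ 3 := by
      rw [hn2w, lucas_binet, mul_comm 3 w, pow_mul, pow_mul]
    have hcaR : 2 * (lucas m1 : ℝ) = (c : ℝ) ^ 2 := by exact_mod_cast hca
    have hcbR : 2 * (lucas m2 : ℝ) = (c : ℝ) ^ 3 := by exact_mod_cast hcb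
    have h1 : (δ ^ g) ^ 2 + (η ^ g) ^ 2 =
        (c : ℝ) ^ 2 * ((alpha ^ w) ^ 2 + (beta ^ w) ^ 2) := by
      rw [← hA2, ← hB2, S1, hl2w]
      linear_combination ((alpha ^ w) ^ 2 + (beta ^ w) ^ 2) * hcaR
    have h2 : (δ ^ g) ^ 3 + (η ^ g) ^ 3 =
        (c : ℝ) ^ 3 * ((alpha ^ w) ^ 3 + (beta ^ w) ^ 3) := by
      rw [← hA3, ← hB3, S2, hl3w]
      linear_combination ((alpha ^ w) ^ 3 + (beta ^ w) ^ 3) * hcbR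
    have hE2 : (δ ^ g + η ^ g) ^ 2 = ((c : ℝ) * (alpha ^ w + beta ^ w)) ^ 2 -
        2 * ((-1 : ℝ) ^ w * (c : ℝ) ^ 2) + 2 * ((ε : ℤ) : ℝ) ^ g := by
      linear_combination h1 + 2 * hABg - 2 * (c : ℝ) ^ 2 * hxyw
    have hE3 : (δ ^ g + η ^ g) ^ 3 - 3 * ((ε : ℤ) : ℝ) ^ g * (δ ^ g + η ^ g) =
        ((c : ℝ) * (alpha ^ w + beta ^ w)) ^ 3 -
          3 * ((-1 : ℝ) ^ w * (c : ℝ) ^ 2) * ((c : ℝ) * (alpha ^ w + beta ^ w)) := by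
      linear_combination h2 + 3 * (δ ^ g + η ^ g) * hABg -
        3 * (c : ℝ) ^ 3 * (alpha ^ w + beta ^ w) * hxyw
    have hEU : (δ ^ g + η ^ g) * (((c : ℝ) * (alpha ^ w + beta ^ w)) ^ 2 -
          2 * ((-1 : ℝ) ^ w * (c : ℝ) ^ 2) - ((ε : ℤ) : ℝ) ^ g) =
        ((c : ℝ) * (alpha ^ w + beta ^ w)) * (((c : ℝ) * (alpha ^ w + beta ^ w)) ^ 2 -
          3 * ((-1 : ℝ) ^ w * (c : ℝ) ^ 2)) := by
      linear_combination hE3 - (δ ^ g + η ^ g) * hE2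
    have hfinal : (((-1 : ℝ) ^ w * (c : ℝ) ^ 2) - ((ε : ℤ) : ℝ) ^ g) *
        (3 * (((-1 : ℝ) ^ w * (c : ℝ) ^ 2) + ((ε : ℤ) : ℝ) ^ g) *
            ((c : ℝ) * (alpha ^ w + beta ^ w)) ^ 2 -
          2 * (2 * ((-1 : ℝ) ^ w * (c : ℝ) ^ 2) + ((ε : ℤ) : ℝ) ^ g) ^ 2) = 0 := by
      have hEU2 : ((δ ^ g + η ^ g) * (((c : ℝ) * (alpha ^ w + beta ^ w)) ^ 2 -
            2 * ((-1 : ℝ) ^ w * (c : ℝ) ^ 2) - ((ε : ℤ) : ℝ) ^ g)) ^ 2 =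
          (((c : ℝ) * (alpha ^ w + beta ^ w)) * (((c : ℝ) * (alpha ^ w + beta ^ w)) ^ 2 -
            3 * ((-1 : ℝ) ^ w * (c : ℝ) ^ 2))) ^ 2 := by rw [hEU]
      linear_combination hEU2 - (((c : ℝ) * (alpha ^ w + beta ^ w)) ^ 2 -
        2 * ((-1 : ℝ) ^ w * (c : ℝ) ^ 2) - ((ε : ℤ) : ℝ) ^ g) ^ 2 * hE2
    have hc2R : (2 : ℝ) ≤ (c : ℝ) := by exact_mod_cast hc2
    have hpq : (((-1 : ℝ) ^ w * (c : ℝ) ^ 2) - ((ε : ℤ) : ℝ) ^ g) ≠ 0 := by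
      intro h0
      rw [sub_eq_zero] at h0
      have h0sq : ((-1 : ℝ) ^ w * (c : ℝ) ^ 2) ^ 2 = (((ε : ℤ) : ℝ) ^ g) ^ 2 := by rw [h0]
      rw [hsgnR g] at h0sq
      have hc4 : (c : ℝ) ^ 4 = 1 := by
        linear_combination h0sq - (c : ℝ) ^ 4 * hngR w
      have h16 : (16 : ℝ) ≤ (c : ℝ) ^ 4 := by
        calc (16 : ℝ) = 2 ^ 4 := by norm_num
        _ ≤ (c : ℝ) ^ 4 := pow_le_pow_left₀ (by norm_num) hc2R 4
      linarith
    have hZ : 3 * (((-1 : ℝ) ^ w * (c : ℝ) ^ 2) + ((ε : ℤ) : ℝ) ^ g) *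
          ((c : ℝ) * (alpha ^ w + beta ^ w)) ^ 2 =
        2 * (2 * ((-1 : ℝ) ^ w * (c : ℝ) ^ 2) + ((ε : ℤ) : ℝ) ^ g) ^ 2 := by
      rcases mul_eq_zero.mp hfinal with h0 | h0
      · exact absurd h0 hpq
      · linarith [h0]
    rw [show alpha ^ w + beta ^ w = (lucas w : ℝ) from (lucas_binet w).symm] at hZ
    have hZint : 3 * ((-1 : ℤ) ^ w * (c : ℤ) ^ 2 + ε ^ g) * ((c : ℤ) * (lucas w : ℤ)) ^ 2 =
        2 * (2 * ((-1 : ℤ) ^ w * (c : ℤ) ^ 2) + ε ^ g) ^ 2 := by exact_mod_cast hZ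
    have hT2 : ((-1 : ℤ) ^ w) ^ 2 = 1 := by
      rw [← pow_mul, mul_comm w 2, pow_mul]
      norm_num
    have hS2 : (ε ^ g) ^ 2 = 1 := by
      rw [← pow_mul, mul_comm g 2, pow_mul]
      have : ε ^ 2 = 1 := by rcases hεpm with h0 | h0 <;> rw [h0] <;> norm_num
      rw [this, one_pow]
    have hdvd : ((c : ℤ) ^ 2) ∣ 2 := by
      refine ⟨3 * ((-1 : ℤ) ^ w * (c : ℤ) ^ 2 + ε ^ g) * ((lucas w : ℤ)) ^ 2 -
        8 * (c : ℤ) ^ 2 - 8 * (-1 : ℤ) ^ w * ε ^ g, ?_⟩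
      linear_combination (-1 : ℤ) * hZint - 8 * (c : ℤ) ^ 4 * hT2 - 2 * hS2
    have hle2 : (c : ℤ) ^ 2 ≤ 2 := Int.le_of_dvd (by norm_num) hdvd
    have hc2Z : (2 : ℤ) ≤ (c : ℤ) := by exact_mod_cast hc2
    have h4 : (4 : ℤ) ≤ (c : ℤ) ^ 2 := by
      calc (4 : ℤ) = 2 ^ 2 := by norm_num
      _ ≤ (c : ℤ) ^ 2 := pow_le_pow_left₀ (by norm_num) hc2Z 2
    linarith
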